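/- Let Q ≥ 1 be an integer and let 0 = q_0 ≤ q_1 ≤ ⋯ ≤ q_ℓ ≤ Q be integers with q_{p−1} ≤ Q − 1 for every p ∈ {1, …, ℓ}. Then Σ_{p=1}^{ℓ} (q_p − q_{p−1})/(Q − q_{p−1}) ≤ Σ_{j=1}^{Q} 1/j. -/

import Mathlib

/-- for an integer `Q ≥ 1` and integers `0 = q_0 ≤ q_1 ≤ ⋯ ≤ q_ℓ ≤ Q`
with `q_{p−1} ≤ Q − 1` for all `p ∈ {1,…,ℓ}`, the relative-gain sum
`Σ_{p=1}^ℓ (q_p − q_{p−1})/(Q − q_{p−1})` is at most the harmonic number `Σ_{j=1}^Q 1/j`. -/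
theorem relative_gain_harmonic_bound
    (Q : ℕ) (hQ : 1 ≤ Q) (ℓ : ℕ) (q : ℕ → ℤ)
    (hq0 : q 0 = 0)
    (hmono : ∀ p, p < ℓ → q p ≤ q (p + 1))
    (hqℓ : q ℓ ≤ (Q : ℤ))
    (hlt : ∀ p, 1 ≤ p → p ≤ ℓ → q (p - 1) ≤ (Q : ℤ) - 1) :
    ∑ p ∈ Finset.Icc 1 ℓ, ((q p : ℝ) - (q (p - 1) : ℝ)) / ((Q : ℝ) - (q (p - 1) : ℝ)) ≤
      ∑ j ∈ Finset.Icc 1 Q, (1 : ℝ) / (j : ℝ) := by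
  -- monotonicity on [0, ℓ]
  have mono : ∀ i j, j ≤ ℓ → i ≤ j → q i ≤ q j := by
    intro i j hj hij
    induction j with
    | zero => simp [Nat.le_zero.mp hij]
    | succ n ih =>
      rcases Nat.lt_or_ge i (n+1) with h | h
      · exact le_trans (ih (by omega) (by omega)) (hmono n (by omega))
      · have : i = n + 1 := by omega
        simp [this]
  have hqle : ∀ p, p ≤ ℓ → q p ≤ (Q : ℤ) := fun p hp => le_trans (mono p ℓ le_rfl hp) hqℓ
  have hq0' : ∀ p, p ≤ ℓ → 0 ≤ q p := fun p hp => hq0 ▸ mono 0 p hp (Nat.zero_le p)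
  -- the intervals
  set I : ℕ → Finset ℕ := fun p => Finset.Icc ((Q - q p).toNat + 1) ((Q - q (p-1)).toNat) with hI
  -- step 1: termwise bound
  have step1 : ∀ p ∈ Finset.Icc 1 ℓ,
      ((q p : ℝ) - (q (p - 1) : ℝ)) / ((Q : ℝ) - (q (p - 1) : ℝ)) ≤
        ∑ j ∈ I p, (1 : ℝ) / (j : ℝ) := by
    intro p hp
    rw [Finset.mem_Icc] at hp
    have h1 : q (p-1) ≤ q p := mono (p-1) p hp.2 (by omega)
    have h2 : q (p-1) ≤ (Q : ℤ) - 1 := hlt p hp.1 hp.2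
    have h3 : (0:ℝ) < (Q : ℝ) - (q (p-1) : ℝ) := by
      have : (q (p-1) : ℝ) < (Q : ℝ) := by exact_mod_cast (by omega : q (p-1) < (Q:ℤ))
      linarith
    have h4 : q p ≤ (Q : ℤ) := hqle p hp.2
    have h0 : 0 ≤ q (p-1) := hq0' (p-1) (by omega)
    have hcard : (I p).card = (q p - q (p-1)).toNat := by
      simp only [hI, Nat.card_Icc]
      omega
    have hbound : ∀ j ∈ I p, (1:ℝ) / ((Q : ℝ) - (q (p-1) : ℝ)) ≤ (1:ℝ) / (j : ℝ) := by
      intro j hj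
      rw [Finset.mem_Icc] at hj
      have hj1 : 1 ≤ j := by omega
      have hjQ : (j : ℤ) ≤ (Q : ℤ) - q (p-1) := by omega
      have : (j : ℝ) ≤ (Q : ℝ) - (q (p-1) : ℝ) := by exact_mod_cast hjQ
      exact one_div_le_one_div_of_le (by exact_mod_cast hj1) this
    have := Finset.card_nsmul_le_sum (I p) (fun j => (1:ℝ)/(j:ℝ))
      ((1:ℝ)/((Q : ℝ) - (q (p-1) : ℝ))) hbound
    rw [hcard, nsmul_eq_mul] at this
    have hc : ((q p - q (p-1)).toNat : ℝ) = (q p : ℝ) - (q (p-1) : ℝ) := by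
      have : ((q p - q (p-1)).toNat : ℤ) = q p - q (p-1) := by omega
      exact_mod_cast this
    rw [hc] at this
    calc ((q p : ℝ) - (q (p - 1) : ℝ)) / ((Q : ℝ) - (q (p - 1) : ℝ))
        = ((q p : ℝ) - (q (p-1) : ℝ)) * ((1:ℝ)/((Q : ℝ) - (q (p-1) : ℝ))) := by ring
      _ ≤ _ := this
  refine le_trans (Finset.sum_le_sum step1) ?_
  -- step 2: the intervals are pairwise disjoint and contained in Icc 1 Q
  have hdisj : ((Finset.Icc 1 ℓ : Finset ℕ) : Set ℕ).PairwiseDisjoint I := by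
    have key : ∀ a b, 1 ≤ a → a ≤ ℓ → b ≤ ℓ → a < b → Disjoint (I a) (I b) := by
      intro a b ha1 ha2 hb2 h
      have hm : q a ≤ q (b-1) := mono a (b-1) (by omega) (by omega)
      apply Finset.disjoint_left.mpr
      intro x hxa hxb
      rw [Finset.mem_Icc] at hxa hxb
      have hQa : q a ≤ (Q:ℤ) := hqle a ha2
      have hQb : q (b-1) ≤ (Q:ℤ) := hqle (b-1) (by omega)
      omega
    intro a ha b hb hab
    simp only [Finset.coe_Icc, Set.mem_Icc] at ha hb
    rcases hab.lt_or_gt with h | h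
    · exact key a b ha.1 ha.2 hb.2 h
    · exact (key b a hb.1 hb.2 ha.2 h).symm
  have hsub : (Finset.Icc 1 ℓ).biUnion I ⊆ Finset.Icc 1 Q := by
    intro x hx
    rw [Finset.mem_biUnion] at hx
    obtain ⟨p, hp, hx⟩ := hx
    rw [Finset.mem_Icc] at hp
    rw [Finset.mem_Icc] at hx ⊢
    have h0 : 0 ≤ q p := hq0' p hp.2
    have h0' : 0 ≤ q (p-1) := hq0' (p-1) (by omega)
    omega
  calc ∑ p ∈ Finset.Icc 1 ℓ, ∑ j ∈ I p, (1:ℝ)/(j:ℝ)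
      = ∑ j ∈ (Finset.Icc 1 ℓ).biUnion I, (1:ℝ)/(j:ℝ) :=
        (Finset.sum_biUnion hdisj).symm
    _ ≤ ∑ j ∈ Finset.Icc 1 Q, (1:ℝ)/(j:ℝ) := by
        apply Finset.sum_le_sum_of_subset_of_nonneg hsub
        intro j hj _
        positivity
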